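/- Let G be a group and define B_p(G) recursively by B_0(G) = G and B_{p+1}(G) = { [x,y] : x, y ∈ B_p(G) }. Then B_p(G) generates the p-th derived subgroup G^{(p)}. -/

import Mathlib

def gcomm {G : Type*} [Group G] (a b : G) : G := a⁻¹ * b⁻¹ * a * b

def Bset (G : Type*) [Group G] : ℕ → Set G
  | 0 => Set.univ
  | p + 1 => {z | ∃ x ∈ Bset G p, ∃ y ∈ Bset G p, z = gcomm x y}

open scoped commutatorElement

lemma gcomm_eq {G : Type*} [Group G] (a b : G) : gcomm a b = ⁅a⁻¹, b⁻¹⁆ := by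
  simp [gcomm, commutatorElement_def]

lemma Bset_inv {G : Type*} [Group G] (p : ℕ) {x : G} (h : x ∈ Bset G p) :
    x⁻¹ ∈ Bset G p := by
  cases p with
  | zero => trivial
  | succ q =>
    obtain ⟨a, ha, b, hb, rfl⟩ := h
    exact ⟨b, hb, a, ha, by simp [gcomm]; group⟩

lemma Bset_conj {G : Type*} [Group G] (p : ℕ) {x : G} (g : G) (h : x ∈ Bset G p) :
    g * x * g⁻¹ ∈ Bset G p := by
  induction p generalizing x with
  | zero => trivial
  | succ q ih =>
    obtain ⟨a, ha, b, hb, rfl⟩ := h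
    exact ⟨g * a * g⁻¹, ih ha, g * b * g⁻¹, ih hb, by simp [gcomm]; group⟩

lemma Bset_closure_normal {G : Type*} [Group G] (p : ℕ) :
    (Subgroup.closure (Bset G p)).Normal := by
  constructor
  intro n hn g
  induction hn using Subgroup.closure_induction with
  | mem x hx => exact Subgroup.subset_closure (Bset_conj p g hx)
  | one => simpa using Subgroup.one_mem _
  | mul x y _ _ hx hy =>
    have : g * (x * y) * g⁻¹ = (g * x * g⁻¹) * (g * y * g⁻¹) := by group
    rw [this]; exact Subgroup.mul_mem _ hx hy
  | inv x _ hx =>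
    have : g * x⁻¹ * g⁻¹ = (g * x * g⁻¹)⁻¹ := by group
    rw [this]; exact Subgroup.inv_mem _ hx

theorem Bset_generates_derived (G : Type*) [Group G] (p : ℕ) :
    Subgroup.closure (Bset G p) = derivedSeries G p := by
  induction p with
  | zero => simp [Bset, derivedSeries]
  | succ q ih =>
    apply le_antisymm
    · rw [Subgroup.closure_le]
      rintro z ⟨x, hx, y, hy, rfl⟩
      rw [gcomm_eq]
      exact Subgroup.commutator_mem_commutator
        (Subgroup.inv_mem _ (ih ▸ Subgroup.subset_closure hx))
        (Subgroup.inv_mem _ (ih ▸ Subgroup.subset_closure hy))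
    · show ⁅derivedSeries G q, derivedSeries G q⁆ ≤ _
      rw [Subgroup.commutator_le]
      rw [← ih]
      haveI := Bset_closure_normal (G := G) (q + 1)
      set K := Subgroup.closure (Bset G (q + 1))
      let f := QuotientGroup.mk' K
      have key : ∀ a ∈ Subgroup.closure (Bset G q), ∀ b ∈ Subgroup.closure (Bset G q),
          Commute (f a) (f b) := by
        intro a ha b hb
        induction ha using Subgroup.closure_induction with
        | mem x hx =>
          induction hb using Subgroup.closure_induction with
          | mem y hy =>
            rw [Commute, SemiconjBy, ← commutatorElement_eq_one_iff_mul_comm,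
              ← map_commutatorElement]
            have h : ⁅x, y⁆ ∈ Bset G (q + 1) :=
              ⟨x⁻¹, Bset_inv q hx, y⁻¹, Bset_inv q hy, by rw [gcomm_eq]; simp⟩
            exact (QuotientGroup.eq_one_iff _).mpr (Subgroup.subset_closure h)
          | one => simp
          | mul y z _ _ hy hz => simpa [map_mul] using hy.mul_right hz
          | inv y _ hy => simpa [map_inv] using hy.inv_right
        | one => simp
        | mul y z _ _ hy hz => simpa [map_mul] using (hy.mul_left hz)
        | inv y _ hy => simpa [map_inv] using hy.inv_left
      intro g₁ h₁ g₂ h₂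
      have : f ⁅g₁, g₂⁆ = 1 := by
        rw [map_commutatorElement, commutatorElement_eq_one_iff_mul_comm]
        exact key g₁ h₁ g₂ h₂
      rwa [← QuotientGroup.ker_mk' K, MonoidHom.mem_ker]
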